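/- Let a : S → ℂ^M be a family of vectors indexed by a measure space (S, μ), and define R = ∫_S f(s) a(s) a(s)^H dμ(s) and R̄ = ∫_S f̄(s) a(s) a(s)^H dμ(s), where f, f̄ : S → ℝ≥0 are integrable and the support of f is contained in the support of f̄, with f ≤ C·f̄ for some constant C > 0. Then the column space of R is contained in the column space of R̄. -/

import Mathlib

open Matrix MeasureTheory
open scoped ComplexOrder

private lemma factor_aux {K V W : Type*} [Field K] [AddCommGroup V] [Module K V]
    [AddCommGroup W] [Module K W] (f g : V →ₗ[K] W)
    (h : LinearMap.ker g ≤ LinearMap.ker f) : ∃ u : W →ₗ[K] W, f = u ∘ₗ g := by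
  let φ : LinearMap.range g →ₗ[K] W :=
    (Submodule.liftQ (LinearMap.ker g) f h) ∘ₗ (g.quotKerEquivRange.symm : _ →ₗ[K] _)
  obtain ⟨u, hu⟩ := φ.exists_extend
  refine ⟨u, ?_⟩
  ext x
  have h1 : u (g x) = φ ⟨g x, LinearMap.mem_range_self g x⟩ := by
    have := LinearMap.congr_fun hu ⟨g x, LinearMap.mem_range_self g x⟩
    simpa using this
  have h2 : g.quotKerEquivRange.symm ⟨g x, LinearMap.mem_range_self g x⟩ =
      (LinearMap.ker g).mkQ x := g.quotKerEquivRange_symm_apply_image x _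
  simp only [LinearMap.comp_apply, h1, φ, LinearEquiv.coe_coe, h2]
  simp [Submodule.mkQ_apply]

private lemma ent_int {S : Type*} [MeasurableSpace S] (μ : Measure S) {M : ℕ}
    (a : S → Fin M → ℂ) (h : S → ℝ)
    (ha_meas : ∀ i, Measurable fun s => a s i)
    (ha_bdd : ∃ B : ℝ, ∀ s i, ‖a s i‖ ≤ B)
    (hh_int : Integrable h μ) (i j : Fin M) :
    Integrable (fun s => (h s : ℂ) * (a s i * star (a s j))) μ := by
  obtain ⟨B, hB⟩ := ha_bdd
  have hint : Integrable (fun s => ((h s : ℂ))) μ := hh_int.ofReal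
  have hmeas : AEStronglyMeasurable (fun s => a s i * star (a s j)) μ :=
    ((ha_meas i).mul (continuous_star.measurable.comp (ha_meas j))).aestronglyMeasurable
  have hbdd : ∃ C, ∀ s, ‖a s i * star (a s j)‖ ≤ C := by
    refine ⟨max B 0 * max B 0, fun s => ?_⟩
    rw [norm_mul, norm_star]
    exact mul_le_mul ((hB s i).trans (le_max_left _ _))
      ((hB s j).trans (le_max_left _ _)) (norm_nonneg _)
      (le_max_right _ _)
  have := hint.bdd_mul hmeas (Filter.Eventually.of_forall hbdd.choose_spec)
  simpa [mul_comm] using this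

private lemma quad_form {S : Type*} [MeasurableSpace S] (μ : Measure S) {M : ℕ}
    (a : S → Fin M → ℂ) (h : S → ℝ)
    (ha_meas : ∀ i, Measurable fun s => a s i)
    (ha_bdd : ∃ B : ℝ, ∀ s i, ‖a s i‖ ≤ B)
    (hh_int : Integrable h μ)
    (T : Matrix (Fin M) (Fin M) ℂ)
    (hT : ∀ i j, T i j = ∫ s, (h s : ℂ) * (a s i * star (a s j)) ∂μ)
    (x : Fin M → ℂ) :
    star x ⬝ᵥ T *ᵥ x
      = ((∫ s, h s * Complex.normSq (star x ⬝ᵥ a s) ∂μ : ℝ) : ℂ) := by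
  have hint : ∀ i j, Integrable (fun s => (h s : ℂ) * (a s i * star (a s j))) μ :=
    ent_int μ a h ha_meas ha_bdd hh_int
  have step1 : star x ⬝ᵥ T *ᵥ x
      = ∑ i, ∑ j, ∫ s, star (x i) * ((h s : ℂ) * (a s i * star (a s j)) * x j) ∂μ := by
    simp only [dotProduct, mulVec, Pi.star_apply]
    refine Finset.sum_congr rfl fun i _ => ?_
    rw [Finset.mul_sum]
    refine Finset.sum_congr rfl fun j _ => ?_
    rw [hT i j, ← integral_mul_const, ← integral_const_mul]
  have hint2 : ∀ (p : Fin M × Fin M),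
      Integrable (fun s => star (x p.1) * ((h s : ℂ) * (a s p.1 * star (a s p.2)) * x p.2)) μ :=
    fun p => ((hint p.1 p.2).mul_const _).const_mul _
  rw [step1, ← Fintype.sum_prod_type']
  rw [← integral_finset_sum _ (fun p _ => hint2 p)]
  rw [show ((∫ s, h s * Complex.normSq (star x ⬝ᵥ a s) ∂μ : ℝ) : ℂ)
      = ∫ s, ((h s * Complex.normSq (star x ⬝ᵥ a s) : ℝ) : ℂ) ∂μ from (integral_ofReal).symm]
  refine integral_congr_ae (Filter.Eventually.of_forall fun s => ?_)
  dsimp only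
  have hstar : star (star x ⬝ᵥ a s) = ∑ j, x j * star (a s j) := by
    simp [dotProduct, star_sum, star_mul', star_star, mul_comm]
  have key : (∑ p : Fin M × Fin M,
      star (x p.1) * ((h s : ℂ) * (a s p.1 * star (a s p.2)) * x p.2))
      = (h s : ℂ) * ((star x ⬝ᵥ a s) * star (star x ⬝ᵥ a s)) := by
    have hexp : (star x ⬝ᵥ a s) * star (star x ⬝ᵥ a s)
        = ∑ p : Fin M × Fin M, (star (x p.1) * a s p.1) * (x p.2 * star (a s p.2)) := by
      rw [hstar, dotProduct, Finset.sum_mul_sum, ← Fintype.sum_prod_type']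
      rfl
    rw [hexp, Finset.mul_sum]
    exact Finset.sum_congr rfl fun p _ => by ring
  rw [key, Complex.ofReal_mul]
  congr 1
  simp only [RCLike.star_def, Complex.mul_conj]

private lemma real_int {S : Type*} [MeasurableSpace S] (μ : Measure S) {M : ℕ}
    (a : S → Fin M → ℂ) (h : S → ℝ)
    (ha_meas : ∀ i, Measurable fun s => a s i)
    (ha_bdd : ∃ B : ℝ, ∀ s i, ‖a s i‖ ≤ B)
    (hh_int : Integrable h μ) (x : Fin M → ℂ) :
    Integrable (fun s => h s * Complex.normSq (star x ⬝ᵥ a s)) μ := by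
  obtain ⟨B, hB⟩ := ha_bdd
  have hmeas : Measurable fun s => star x ⬝ᵥ a s := by
    apply Finset.measurable_sum
    intro i _
    exact measurable_const.mul (ha_meas i)
  have hmeas2 : AEStronglyMeasurable (fun s => Complex.normSq (star x ⬝ᵥ a s)) μ :=
    (Complex.continuous_normSq.measurable.comp hmeas).aestronglyMeasurable
  have hbdd : ∃ C, ∀ s, ‖Complex.normSq (star x ⬝ᵥ a s)‖ ≤ C := by
    refine ⟨(∑ i, ‖x i‖ * max B 0) ^ 2, fun s => ?_⟩
    have h1 : ‖star x ⬝ᵥ a s‖ ≤ ∑ i, ‖x i‖ * max B 0 := by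
      refine (norm_sum_le _ _).trans (Finset.sum_le_sum fun i _ => ?_)
      rw [norm_mul, Pi.star_apply, norm_star]
      exact mul_le_mul_of_nonneg_left ((hB s i).trans (le_max_left _ _)) (norm_nonneg _)
    have h2 : Complex.normSq (star x ⬝ᵥ a s) = ‖star x ⬝ᵥ a s‖ ^ 2 := by
      rw [Complex.normSq_eq_norm_sq]
    rw [Real.norm_eq_abs, abs_of_nonneg (Complex.normSq_nonneg _), h2]
    exact pow_le_pow_left₀ (norm_nonneg _) h1 2
  have := hh_int.bdd_mul hmeas2 (Filter.Eventually.of_forall hbdd.choose_spec)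
  simpa [mul_comm] using this

theorem stmt_5 {M : ℕ} {S : Type*} [MeasurableSpace S] (μ : Measure S)
    (a : S → Fin M → ℂ) (f fbar : S → ℝ) (C : ℝ) (hC : 0 < C)
    (ha_meas : ∀ i, Measurable fun s => a s i)
    (ha_bdd : ∃ B : ℝ, ∀ s i, ‖a s i‖ ≤ B)
    (hf_nonneg : ∀ s, 0 ≤ f s) (hfbar_nonneg : ∀ s, 0 ≤ fbar s)
    (hf_int : Integrable f μ) (hfbar_int : Integrable fbar μ)
    (hdom : ∀ s, f s ≤ C * fbar s)
    (R Rbar : Matrix (Fin M) (Fin M) ℂ)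
    (hR : ∀ i j, R i j = ∫ s, (f s : ℂ) * (a s i * star (a s j)) ∂μ)
    (hRbar : ∀ i j, Rbar i j = ∫ s, (fbar s : ℂ) * (a s i * star (a s j)) ∂μ) :
    LinearMap.range R.mulVecLin ≤ LinearMap.range Rbar.mulVecLin := by
  -- R is Hermitian
  have hRherm : R.IsHermitian := by
    ext i j
    rw [conjTranspose_apply, hR j i, hR i j]
    calc star (∫ s, ((f s : ℂ)) * (a s j * star (a s i)) ∂μ)
        = ∫ s, (starRingEnd ℂ) ((f s : ℂ) * (a s j * star (a s i))) ∂μ := integral_conj.symm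
    _ = _ := by
        refine integral_congr_ae (Filter.Eventually.of_forall fun s => ?_)
        simp only [_root_.map_mul, Complex.conj_ofReal, Complex.conj_conj, RCLike.star_def]
        ring
  have hRbarherm : Rbar.IsHermitian := by
    ext i j
    rw [conjTranspose_apply, hRbar j i, hRbar i j]
    calc star (∫ s, ((fbar s : ℂ)) * (a s j * star (a s i)) ∂μ)
        = ∫ s, (starRingEnd ℂ) ((fbar s : ℂ) * (a s j * star (a s i))) ∂μ := integral_conj.symm
    _ = _ := by
        refine integral_congr_ae (Filter.Eventually.of_forall fun s => ?_)
        simp only [_root_.map_mul, Complex.conj_ofReal, Complex.conj_conj, RCLike.star_def]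
        ring
  -- R is PSD
  have hRpsd : R.PosSemidef := by
    refine PosSemidef.of_dotProduct_mulVec_nonneg hRherm fun x => ?_
    rw [quad_form μ a f ha_meas ha_bdd hf_int R hR x]
    rw [Complex.zero_le_real]
    exact integral_nonneg fun s => mul_nonneg (hf_nonneg s) (Complex.normSq_nonneg _)
  -- kernel inclusion
  have hker : LinearMap.ker Rbar.mulVecLin ≤ LinearMap.ker R.mulVecLin := by
    intro x hx
    rw [LinearMap.mem_ker, Matrix.mulVecLin_apply] at hx ⊢
    have hzero : star x ⬝ᵥ Rbar *ᵥ x = 0 := by rw [hx, dotProduct_zero]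
    rw [quad_form μ a fbar ha_meas ha_bdd hfbar_int Rbar hRbar x] at hzero
    have hIbar : (∫ s, fbar s * Complex.normSq (star x ⬝ᵥ a s) ∂μ) = 0 :=
      Complex.ofReal_eq_zero.mp hzero
    have hI : (∫ s, f s * Complex.normSq (star x ⬝ᵥ a s) ∂μ) = 0 := by
      have hle : (∫ s, f s * Complex.normSq (star x ⬝ᵥ a s) ∂μ)
          ≤ ∫ s, C * (fbar s * Complex.normSq (star x ⬝ᵥ a s)) ∂μ := by
        refine integral_mono (real_int μ a f ha_meas ha_bdd hf_int x)
          ((real_int μ a fbar ha_meas ha_bdd hfbar_int x).const_mul C) fun s => ?_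
        rw [← mul_assoc]
        exact mul_le_mul_of_nonneg_right (hdom s) (Complex.normSq_nonneg _)
      rw [integral_const_mul, hIbar, mul_zero] at hle
      have hge : 0 ≤ ∫ s, f s * Complex.normSq (star x ⬝ᵥ a s) ∂μ :=
        integral_nonneg fun s => mul_nonneg (hf_nonneg s) (Complex.normSq_nonneg _)
      linarith
    have hq : star x ⬝ᵥ R *ᵥ x = 0 := by
      rw [quad_form μ a f ha_meas ha_bdd hf_int R hR x, hI, Complex.ofReal_zero]
    exact (hRpsd.dotProduct_mulVec_zero_iff x).mp hq
  -- factor R through Rbar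
  obtain ⟨u, hu⟩ := factor_aux R.mulVecLin Rbar.mulVecLin hker
  have hmat : R = LinearMap.toMatrix' u * Rbar := by
    have h1 : R = LinearMap.toMatrix' R.mulVecLin := by
      rw [← Matrix.toLin'_apply' R, LinearMap.toMatrix'_toLin']
    have h2 : Rbar = LinearMap.toMatrix' Rbar.mulVecLin := by
      rw [← Matrix.toLin'_apply' Rbar, LinearMap.toMatrix'_toLin']
    rw [h1, hu, LinearMap.toMatrix'_comp, ← h2]
  have hRG : R = Rbar * (LinearMap.toMatrix' u)ᴴ := by
    calc R = Rᴴ := hRherm.symm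
    _ = (LinearMap.toMatrix' u * Rbar)ᴴ := by rw [← hmat]
    _ = Rbarᴴ * (LinearMap.toMatrix' u)ᴴ := by rw [conjTranspose_mul]
    _ = Rbar * (LinearMap.toMatrix' u)ᴴ := by rw [hRbarherm]
  rintro y ⟨x, rfl⟩
  exact ⟨(LinearMap.toMatrix' u)ᴴ *ᵥ x, by
    simp [Matrix.mulVecLin_apply, hRG, ← Matrix.mulVec_mulVec]⟩
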